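/- Let (Ω, 𝒜, P) be a probability space, let n ≥ 1, let K ≥ 2, and distinguish an index i⋆ ∈ {1,…,K}. For each i and s ∈ {1,…,n} let R̄_{i,s} : Ω → [0,1] be random variables, let (R⋆_t)_{t=1}^n be random variables with values in [0,1], and let T_1(n),…,T_K(n) : Ω → {0,1,…,n} be random variables with Σ_{i=1}^K T_i(n) = n pointwise. Assume that pointwise T_{i⋆}(n)·R̄_{i⋆,T_{i⋆}(n)} = Σ_{t=1}^{T_{i⋆}(n)} R⋆_t, define R̄_n = Σ_{i=1}^K (T_i(n)/n)·R̄_{i,T_i(n)}, and let μ⋆_n = (1/n)·Σ_{t=1}^n E[R⋆_t] and μ⋆ ∈ ℝ. Then |E[R̄_n] − μ⋆| ≤ |μ⋆ − μ⋆_n| + (2/n)·Σ_{i ≠ i⋆} E[T_i(n)]. -/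

import Mathlib

open MeasureTheory

/-- Lemma 5 in explicit form: with `R̄_n = Σ_i (T_i(n)/n)·R̄_{i,T_i(n)}` the overall
average reward, `μ⋆_n = (1/n)·Σ_{t=1}^n E[R⋆_t]`, and
`T_{i⋆}(n)·R̄_{i⋆,T_{i⋆}(n)} = Σ_{t=1}^{T_{i⋆}(n)} R⋆_t` pointwise,
`|E[R̄_n] − μ⋆| ≤ |μ⋆ − μ⋆_n| + (2/n)·Σ_{i ≠ i⋆} E[T_i(n)]`. -/
theorem stmt_5 {Ω : Type*} [MeasurableSpace Ω] (P : Measure Ω) [IsProbabilityMeasure P]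
    (n K : ℕ) (hn : 1 ≤ n) (hK : 2 ≤ K) (istar : Fin K)
    (Rbar : Fin K → ℕ → Ω → ℝ)
    (hRbarMeas : ∀ i s, Measurable (Rbar i s))
    (hRbarMem : ∀ i s ω, 1 ≤ s → s ≤ n → Rbar i s ω ∈ Set.Icc (0 : ℝ) 1)
    (Rstar : ℕ → Ω → ℝ)
    (hRstarMeas : ∀ t, Measurable (Rstar t))
    (hRstarMem : ∀ t ω, 1 ≤ t → t ≤ n → Rstar t ω ∈ Set.Icc (0 : ℝ) 1)
    (T : Fin K → Ω → ℕ)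
    (hTmeas : ∀ i, Measurable (T i))
    (hTle : ∀ i ω, T i ω ≤ n)
    (hTsum : ∀ ω, ∑ i, T i ω = n)
    (hkey : ∀ ω, (T istar ω : ℝ) * Rbar istar (T istar ω) ω
      = ∑ t ∈ Finset.Icc 1 (T istar ω), Rstar t ω)
    (Rbar_n : Ω → ℝ)
    (hRbar_n : ∀ ω, Rbar_n ω = ∑ i, ((T i ω : ℝ) / (n : ℝ)) * Rbar i (T i ω) ω)
    (μstar_n μstar : ℝ)
    (hμstar_n : μstar_n = (1 / (n : ℝ)) * ∑ t ∈ Finset.Icc 1 n, ∫ ω, Rstar t ω ∂P) :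
    |(∫ ω, Rbar_n ω ∂P) - μstar| ≤
      |μstar - μstar_n| +
        (2 / (n : ℝ)) * ∑ i ∈ Finset.univ.erase istar, ∫ ω, (T i ω : ℝ) ∂P := by
  have hn0 : (0:ℝ) < n := by exact_mod_cast hn
  set A : Finset (Fin K) := Finset.univ.erase istar with hA
  -- term representation as finite sum of ite, for measurability
  have hterm_eq : ∀ i : Fin K, (fun ω => ((T i ω : ℝ) / n) * Rbar i (T i ω) ω)
      = fun ω => ∑ s ∈ Finset.range (n+1),
          if T i ω = s then ((s:ℝ)/n) * Rbar i s ω else 0 := by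
    intro i; funext ω
    rw [Finset.sum_ite_eq, if_pos (Finset.mem_range.mpr (Nat.lt_succ_of_le (hTle i ω)))]
  have hmeas_term : ∀ i : Fin K,
      Measurable (fun ω => ((T i ω : ℝ) / n) * Rbar i (T i ω) ω) := by
    intro i
    rw [hterm_eq i]
    refine Finset.measurable_sum _ fun s _ => Measurable.ite ?_ ?_ measurable_const
    · exact (hTmeas i) (measurableSet_singleton s)
    · exact (hRbarMeas i s).const_mul _
  have hterm_bd : ∀ (i : Fin K) ω, |((T i ω : ℝ) / n) * Rbar i (T i ω) ω| ≤ 1 := by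
    intro i ω
    rcases Nat.eq_zero_or_pos (T i ω) with h0 | hpos
    · simp [h0]
    · have hm := hRbarMem i (T i ω) ω hpos (hTle i ω)
      rw [abs_mul]
      have h1 : |((T i ω : ℝ) / n)| ≤ 1 := by
        rw [abs_of_nonneg (by positivity), div_le_one hn0]
        exact_mod_cast hTle i ω
      have h2 : |Rbar i (T i ω) ω| ≤ 1 := abs_le.mpr ⟨by linarith [hm.1], hm.2⟩
      calc |((T i ω : ℝ) / n)| * |Rbar i (T i ω) ω| ≤ 1 * 1 :=
            mul_le_mul h1 h2 (abs_nonneg _) (by norm_num)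
        _ = 1 := by norm_num
  have hint_term : ∀ i : Fin K,
      Integrable (fun ω => ((T i ω : ℝ) / n) * Rbar i (T i ω) ω) P := by
    intro i
    refine (integrable_const (1:ℝ)).mono' (hmeas_term i).aestronglyMeasurable ?_
    refine Filter.Eventually.of_forall fun ω => ?_
    rw [Real.norm_eq_abs]
    exact hterm_bd i ω
  have hfun : Rbar_n = fun ω => ∑ i, ((T i ω : ℝ) / n) * Rbar i (T i ω) ω :=
    funext hRbar_n
  have hint_f : Integrable Rbar_n P := by
    rw [hfun]; exact integrable_finset_sum _ fun i _ => hint_term i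
  have hint_Rstar : ∀ t ∈ Finset.Icc 1 n, Integrable (Rstar t) P := by
    intro t ht
    rw [Finset.mem_Icc] at ht
    refine (integrable_const (1:ℝ)).mono' (hRstarMeas t).aestronglyMeasurable ?_
    refine Filter.Eventually.of_forall fun ω => ?_
    have hm := hRstarMem t ω ht.1 ht.2
    rw [Real.norm_eq_abs]
    exact abs_le.mpr ⟨by linarith [hm.1], hm.2⟩
  have hint_g : Integrable (fun ω => (1/(n:ℝ)) * ∑ t ∈ Finset.Icc 1 n, Rstar t ω) P :=
    (integrable_finset_sum _ hint_Rstar).const_mul _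
  have hint_T : ∀ i : Fin K, Integrable (fun ω => (T i ω : ℝ)) P := by
    intro i
    refine (integrable_const (n:ℝ)).mono'
      ((measurable_from_top).comp (hTmeas i)).aestronglyMeasurable ?_
    refine Filter.Eventually.of_forall fun ω => ?_
    rw [Real.norm_eq_abs, abs_of_nonneg (by positivity)]
    exact_mod_cast hTle i ω
  have hint_h : Integrable (fun ω => (2/(n:ℝ)) * ∑ i ∈ A, (T i ω : ℝ)) P :=
    (integrable_finset_sum _ fun i _ => hint_T i).const_mul _
  -- pointwise key inequality
  have hkey2 : ∀ ω, |Rbar_n ω - (1/(n:ℝ)) * ∑ t ∈ Finset.Icc 1 n, Rstar t ω|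
      ≤ (2/(n:ℝ)) * ∑ i ∈ A, (T i ω : ℝ) := by
    intro ω
    set τ := T istar ω with hτ
    have hτn : τ ≤ n := hTle istar ω
    have hIcc : ∀ m : ℕ, Finset.Icc 1 m = Finset.Ioc 0 m := by
      intro m; rw [← Finset.Icc_add_one_left_eq_Ioc]; rfl
    have hsplit : ∑ t ∈ Finset.Icc 1 n, Rstar t ω
        = ∑ t ∈ Finset.Icc 1 τ, Rstar t ω + ∑ t ∈ Finset.Ioc τ n, Rstar t ω := by
      rw [hIcc n, hIcc τ, Finset.sum_Ioc_consecutive _ (Nat.zero_le τ) hτn]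
    set B := ∑ t ∈ Finset.Ioc τ n, Rstar t ω with hB
    set A' := ∑ i ∈ A, (T i ω : ℝ) * Rbar i (T i ω) ω with hA'
    set C := ∑ i ∈ A, (T i ω : ℝ) with hC
    have hsum_split : ∑ i, (T i ω : ℝ) * Rbar i (T i ω) ω
        = (τ : ℝ) * Rbar istar τ ω + A' := by
      rw [hA', hA]
      exact (Finset.add_sum_erase Finset.univ
        (fun i => (T i ω : ℝ) * Rbar i (T i ω) ω) (Finset.mem_univ istar)).symm
    have hfωval : Rbar_n ω = (1/(n:ℝ)) * ((τ:ℝ) * Rbar istar τ ω + A') := by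
      rw [hRbar_n ω, ← hsum_split, Finset.mul_sum]
      refine Finset.sum_congr rfl fun i _ => by ring
    have hdiff : Rbar_n ω - (1/(n:ℝ)) * ∑ t ∈ Finset.Icc 1 n, Rstar t ω
        = (1/(n:ℝ)) * (A' - B) := by
      rw [hfωval, hsplit, ← hkey ω, ← hτ]
      ring
    -- bounds on A'
    have hA'bd : 0 ≤ A' ∧ A' ≤ C := by
      constructor
      · refine Finset.sum_nonneg fun i _ => ?_
        rcases Nat.eq_zero_or_pos (T i ω) with h0 | hpos
        · simp [h0]
        · have hm := hRbarMem i (T i ω) ω hpos (hTle i ω)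
          exact mul_nonneg (Nat.cast_nonneg _) hm.1
      · refine Finset.sum_le_sum fun i _ => ?_
        rcases Nat.eq_zero_or_pos (T i ω) with h0 | hpos
        · simp [h0]
        · have hm := hRbarMem i (T i ω) ω hpos (hTle i ω)
          have ht0 : (0:ℝ) ≤ (T i ω : ℝ) := Nat.cast_nonneg _
          nlinarith [hm.2]
    -- C = n - τ
    have hCeq : C = (n : ℝ) - (τ : ℝ) := by
      have h1 : τ + ∑ i ∈ A, T i ω = n := by
        rw [← hTsum ω, hA]
        exact Finset.add_sum_erase Finset.univ (fun i => T i ω) (Finset.mem_univ istar)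
      have h2 : (τ : ℝ) + C = (n : ℝ) := by
        rw [hC, ← Nat.cast_sum, ← Nat.cast_add, h1]
      linarith
    -- bounds on B
    have hBbd : 0 ≤ B ∧ B ≤ (n : ℝ) - (τ : ℝ) := by
      constructor
      · refine Finset.sum_nonneg fun t ht => ?_
        rw [Finset.mem_Ioc] at ht
        exact (hRstarMem t ω (by omega) ht.2).1
      · calc B ≤ ∑ t ∈ Finset.Ioc τ n, (1:ℝ) := by
              refine Finset.sum_le_sum fun t ht => ?_
              rw [Finset.mem_Ioc] at ht
              exact (hRstarMem t ω (by omega) ht.2).2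
          _ = ((n - τ : ℕ) : ℝ) := by
              rw [Finset.sum_const, Nat.card_Ioc]; simp
          _ = (n : ℝ) - (τ : ℝ) := by
              push_cast [Nat.cast_sub hτn]; ring
    have hCnn : 0 ≤ C := Finset.sum_nonneg fun i _ => Nat.cast_nonneg _
    have habs : |A' - B| ≤ C := by
      rw [← hCeq] at hBbd
      exact abs_le.mpr ⟨by linarith [hA'bd.1, hBbd.2], by linarith [hA'bd.2, hBbd.1]⟩
    rw [hdiff, abs_mul, abs_of_nonneg (by positivity : (0:ℝ) ≤ 1/(n:ℝ))]
    have : (1/(n:ℝ)) * |A' - B| ≤ (1/(n:ℝ)) * C := by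
      apply mul_le_mul_of_nonneg_left habs (by positivity)
    have h2C : (1/(n:ℝ)) * C ≤ (2/(n:ℝ)) * C := by
      apply mul_le_mul_of_nonneg_right _ hCnn
      rw [div_le_div_iff₀ hn0 hn0]; nlinarith
    linarith
  -- integral of g is μstar_n
  have hμn : μstar_n = ∫ ω, (1/(n:ℝ)) * ∑ t ∈ Finset.Icc 1 n, Rstar t ω ∂P := by
    rw [hμstar_n, integral_const_mul, integral_finset_sum _ hint_Rstar]
  -- main bound
  have hmain : |(∫ ω, Rbar_n ω ∂P) - μstar_n|
      ≤ (2/(n:ℝ)) * ∑ i ∈ A, ∫ ω, (T i ω : ℝ) ∂P := by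
    have h1 : (∫ ω, Rbar_n ω ∂P) - μstar_n
        = ∫ ω, (Rbar_n ω - (1/(n:ℝ)) * ∑ t ∈ Finset.Icc 1 n, Rstar t ω) ∂P := by
      rw [integral_sub hint_f hint_g, hμn]
    rw [h1]
    calc |∫ ω, (Rbar_n ω - (1/(n:ℝ)) * ∑ t ∈ Finset.Icc 1 n, Rstar t ω) ∂P|
        ≤ ∫ ω, |Rbar_n ω - (1/(n:ℝ)) * ∑ t ∈ Finset.Icc 1 n, Rstar t ω| ∂P := by
          rw [← Real.norm_eq_abs]
          refine (norm_integral_le_integral_norm _).trans_eq ?_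
          simp [Real.norm_eq_abs]
      _ ≤ ∫ ω, (2/(n:ℝ)) * ∑ i ∈ A, (T i ω : ℝ) ∂P := by
          refine integral_mono (hint_f.sub hint_g).abs hint_h fun ω => hkey2 ω
      _ = (2/(n:ℝ)) * ∑ i ∈ A, ∫ ω, (T i ω : ℝ) ∂P := by
          rw [integral_const_mul, integral_finset_sum _ fun i _ => hint_T i]
  have habs2 : |(∫ ω, Rbar_n ω ∂P) - μstar|
      ≤ |(∫ ω, Rbar_n ω ∂P) - μstar_n| + |μstar - μstar_n| := by
    have h := abs_sub_le (∫ ω, Rbar_n ω ∂P) μstar_n μstar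
    rw [abs_sub_comm μstar_n μstar] at h
    exact h
  linarith
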